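/- Consider the order-p spiked tensor model with Rademacher prior: ‖L_n^{≤D}‖² = Σ_{d=0}^D (λ^{2d}/d!) E[⟨x¹,x²⟩^{pd}] where x¹,x² are i.i.d. uniform on {±1}^n. If λ ≤ (1/√2) p^{−p/4−1/2} n^{−p/4} D^{(2−p)/4} for all sufficiently large n, then ‖L_n^{≤D}‖² is bounded as n → ∞ (with p fixed). -/

import Mathlib

open MeasureTheory Filter

/-- The Rademacher distribution, uniform on `{±1} ⊆ ℝ`. -/
noncomputable def rad : Measure ℝ :=
  (2⁻¹ : ENNReal) • (Measure.dirac 1 + Measure.dirac (-1))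

open scoped Classical
set_option maxHeartbeats 1000000

namespace Stmt15Aux

noncomputable def sgn (b : Bool) : ℝ := if b then 1 else -1

noncomputable def vv {n : ℕ} (s : Fin n → Bool) : Fin n → ℝ := fun i => sgn (s i)

instance : IsProbabilityMeasure rad := by
  constructor
  rw [rad, Measure.smul_apply, Measure.add_apply]
  simp only [measure_univ, smul_eq_mul, one_add_one_eq_two]
  exact ENNReal.inv_mul_cancel two_ne_zero ENNReal.ofNat_ne_top

theorem rad_apply {t : Set ℝ} (ht : MeasurableSet t) :
    rad t = 2⁻¹ * ((if (1:ℝ) ∈ t then 1 else 0) + (if (-1:ℝ) ∈ t then 1 else 0)) := by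
  rw [rad, Measure.smul_apply, Measure.add_apply, Measure.dirac_apply' _ ht,
    Measure.dirac_apply' _ ht, Set.indicator_apply, Set.indicator_apply]
  simp only [Pi.one_apply, smul_eq_mul]

theorem pi_rad (n : ℕ) :
    Measure.pi (fun _ : Fin n => rad) =
      ((2 : ENNReal) ^ n)⁻¹ • ∑ s : Fin n → Bool, Measure.dirac (vv s) := by
  refine Measure.pi_eq ?_
  intro S hS
  rw [Measure.smul_apply, Measure.finset_sum_apply]
  have hmeas : MeasurableSet (Set.pi Set.univ S) := MeasurableSet.univ_pi hS
  have h1 : ∀ s : Fin n → Bool, Measure.dirac (vv s) (Set.pi Set.univ S) =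
      ∏ i, (if sgn (s i) ∈ S i then (1 : ENNReal) else 0) := by
    intro s
    rw [Measure.dirac_apply' _ hmeas, Set.indicator_apply, Finset.prod_boole]
    simp [Set.mem_univ_pi, vv]
  simp_rw [h1]
  rw [show (∑ s : Fin n → Bool, ∏ i, (if sgn (s i) ∈ S i then (1 : ENNReal) else 0))
      = ∏ i, ∑ b : Bool, (if sgn b ∈ S i then (1 : ENNReal) else 0) by
    rw [Finset.prod_univ_sum]
    rw [Fintype.piFinset_univ]]
  simp_rw [rad_apply (hS _)]
  rw [Finset.prod_mul_distrib, Finset.prod_const, Finset.card_univ, Fintype.card_fin,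
    ← ENNReal.inv_pow]
  congr 1
  refine Finset.prod_congr rfl fun i _ => ?_
  rw [Fintype.sum_bool]
  simp only [sgn]
  norm_num [add_comm]

theorem sum_dirac_vv_apply (n : ℕ) {A : Set (Fin n → ℝ)} (hA : MeasurableSet A) :
    ∑ s : Fin n → Bool, Measure.dirac (vv s) A
      = ∑ s : Fin n → Bool, (if vv s ∈ A then (1 : ENNReal) else 0) := by
  refine Finset.sum_congr rfl fun s _ => ?_
  rw [Measure.dirac_apply' _ hA, Set.indicator_apply]
  simp

theorem pi_rad_apply (n : ℕ) {A : Set (Fin n → ℝ)} (hA : MeasurableSet A) :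
    Measure.pi (fun _ : Fin n => rad) A
      = ((2 : ENNReal) ^ n)⁻¹ * ∑ s : Fin n → Bool, (if vv s ∈ A then (1 : ENNReal) else 0) := by
  rw [pi_rad, Measure.smul_apply, Measure.finset_sum_apply, smul_eq_mul, sum_dirac_vv_apply n hA]

theorem prod_rad (n : ℕ) :
    (Measure.pi (fun _ : Fin n => rad)).prod (Measure.pi fun _ : Fin n => rad) =
      (((2 : ENNReal) ^ n)⁻¹ * ((2 : ENNReal) ^ n)⁻¹) •
        ∑ u : (Fin n → Bool) × (Fin n → Bool), Measure.dirac (vv u.1, vv u.2) := by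
  refine Measure.prod_eq ?_
  intro A B hA hB
  rw [Measure.smul_apply, Measure.finset_sum_apply, smul_eq_mul]
  have h1 : ∀ u : (Fin n → Bool) × (Fin n → Bool),
      Measure.dirac ((vv u.1, vv u.2) : (Fin n → ℝ) × (Fin n → ℝ)) (A ×ˢ B)
        = (if vv u.1 ∈ A then (1 : ENNReal) else 0) * (if vv u.2 ∈ B then (1 : ENNReal) else 0) := by
    intro u
    rw [Measure.dirac_apply' _ (hA.prod hB), Set.indicator_apply]
    by_cases h1 : vv u.1 ∈ A <;> by_cases h2 : vv u.2 ∈ B <;>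
      simp [Set.mem_prod, h1, h2]
  simp_rw [h1]
  rw [Fintype.sum_prod_type, pi_rad_apply n hA, pi_rad_apply n hB]
  dsimp only
  rw [mul_mul_mul_comm, Finset.sum_mul_sum]

theorem integral_atomic {α : Type*} [MeasurableSpace α] [MeasurableSingletonClass α]
    {ι : Type*} [Fintype ι] (c : ENNReal) (a : ι → α) (f : α → ℝ)
    (hf : StronglyMeasurable f) :
    ∫ x, f x ∂(c • ∑ i : ι, Measure.dirac (a i)) = c.toReal * ∑ i : ι, f (a i) := by
  rw [integral_smul_measure, integral_finset_sum_measure]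
  · simp_rw [integral_dirac]
    rfl
  · intro i _
    refine ⟨hf.aestronglyMeasurable, ?_⟩
    rw [HasFiniteIntegral, lintegral_dirac]
    exact ENNReal.coe_lt_top

theorem integral_prod_rad (n : ℕ) (f : ((Fin n → ℝ) × (Fin n → ℝ)) → ℝ)
    (hf : StronglyMeasurable f) :
    ∫ q, f q ∂((Measure.pi fun _ : Fin n => rad).prod (Measure.pi fun _ : Fin n => rad))
      = ((4 : ℝ) ^ n)⁻¹ * ∑ u : (Fin n → Bool) × (Fin n → Bool), f (vv u.1, vv u.2) := by
  rw [prod_rad, integral_atomic _ _ _ hf]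
  congr 1
  rw [← ENNReal.mul_inv (Or.inl (by positivity)) (Or.inl (by simp)), ← pow_add,
    ENNReal.toReal_inv]
  rw [← two_mul, pow_mul]
  norm_num

theorem sgn_mul_self (b : Bool) : sgn b * sgn b = 1 := by cases b <;> simp [sgn]

theorem sgn_not (b : Bool) : sgn (!b) = -sgn b := by cases b <;> simp [sgn]

/-- MGF computation over the finite cube. -/
theorem sum_exp (n : ℕ) (c : ℝ) :
    ∑ u : (Fin n → Bool) × (Fin n → Bool),
      Real.exp (c * ∑ i, sgn (u.1 i) * sgn (u.2 i))
    = (2 * (Real.exp c + Real.exp (-c))) ^ n := by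
  have h1 : ∀ u : (Fin n → Bool) × (Fin n → Bool),
      Real.exp (c * ∑ i, sgn (u.1 i) * sgn (u.2 i))
        = ∏ i, Real.exp (c * (sgn (u.1 i) * sgn (u.2 i))) := by
    intro u
    rw [← Real.exp_sum, Finset.mul_sum]
  simp_rw [h1]
  rw [← Equiv.sum_comp (Equiv.arrowProdEquivProdArrow (Fin n) (fun _ => Bool) (fun _ => Bool))
    (fun u : (Fin n → Bool) × (Fin n → Bool) =>
      ∏ i, Real.exp (c * (sgn (u.1 i) * sgn (u.2 i))))]
  have h2 : ∀ w : Fin n → Bool × Bool,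
      (∏ i, Real.exp (c * (sgn (((Equiv.arrowProdEquivProdArrow (Fin n) (fun _ => Bool) (fun _ => Bool)) w).1 i) *
        sgn (((Equiv.arrowProdEquivProdArrow (Fin n) (fun _ => Bool) (fun _ => Bool)) w).2 i))))
      = ∏ i, Real.exp (c * (sgn ((w i).1) * sgn ((w i).2))) := fun w => rfl
  simp_rw [h2]
  rw [← Fintype.piFinset_univ]
  have h4 : ∑ x ∈ Fintype.piFinset (fun _ : Fin n => (Finset.univ : Finset (Bool × Bool))),
      ∏ i : Fin n, Real.exp (c * (sgn (x i).1 * sgn (x i).2))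
      = ∏ i : Fin n, ∑ z ∈ (Finset.univ : Finset (Bool × Bool)),
          Real.exp (c * (sgn z.1 * sgn z.2)) :=
    (Finset.prod_univ_sum (fun _ => (Finset.univ : Finset (Bool × Bool)))
      (fun _ z => Real.exp (c * (sgn z.1 * sgn z.2)))).symm
  rw [h4]
  have h3 : ∑ z ∈ (Finset.univ : Finset (Bool × Bool)), Real.exp (c * (sgn z.1 * sgn z.2))
      = 2 * (Real.exp c + Real.exp (-c)) := by
    rw [Fintype.sum_prod_type]
    simp [sgn, Fintype.sum_bool]
    ring
  rw [h3]
  rw [Finset.prod_const, Finset.card_univ, Fintype.card_fin]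

/-- Odd moments vanish by symmetry. -/
theorem sum_odd (n m : ℕ) (hm : Odd m) :
    ∑ u : (Fin n → Bool) × (Fin n → Bool), (∑ i, sgn (u.1 i) * sgn (u.2 i)) ^ m = 0 := by
  set f : (Fin n → Bool) × (Fin n → Bool) → ℝ :=
    fun u => (∑ i, sgn (u.1 i) * sgn (u.2 i)) ^ m with hf
  have hinv : Function.Involutive (fun u : (Fin n → Bool) × (Fin n → Bool) =>
      ((fun i => !u.1 i, u.2) : (Fin n → Bool) × (Fin n → Bool))) := by
    intro u; simp
  have h1 : ∑ u, f u = ∑ u, f (hinv.toPerm _ u) :=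
    (Equiv.sum_comp (hinv.toPerm _) f).symm
  have h2 : ∀ u, f (hinv.toPerm _ u) = - f u := by
    intro u
    have : (∑ i, sgn (!u.1 i) * sgn (u.2 i)) = -∑ i, sgn (u.1 i) * sgn (u.2 i) := by
      rw [← Finset.sum_neg_distrib]
      exact Finset.sum_congr rfl fun i _ => by rw [sgn_not, neg_mul]
    show (∑ i, sgn (!u.1 i) * sgn (u.2 i)) ^ m = _
    rw [this, hm.neg_pow]
  simp only [h2, Finset.sum_neg_distrib] at h1
  linarith

theorem factorial_le {j : ℕ} (hj : 1 ≤ j) :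
    (j.factorial : ℝ) ≤ Real.exp 1 * Real.sqrt j * ((j : ℝ) / Real.exp 1) ^ j := by
  obtain ⟨j', rfl⟩ : ∃ j', j = j' + 1 := ⟨j - 1, (Nat.succ_pred_eq_of_pos hj).symm⟩
  have hpos1 : 0 < Stirling.stirlingSeq (j' + 1) := Stirling.stirlingSeq'_pos j'
  have hpos2 : (0:ℝ) < Stirling.stirlingSeq 1 := Stirling.stirlingSeq'_pos 0
  have hlog := Stirling.log_stirlingSeq'_antitone (Nat.zero_le j')
  have hss : Stirling.stirlingSeq (j' + 1) ≤ Stirling.stirlingSeq 1 :=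
    (Real.log_le_log_iff hpos1 hpos2).mp hlog
  rw [Stirling.stirlingSeq_one] at hss
  have hX : (0:ℝ) < Real.sqrt (2 * (j' + 1 : ℕ)) * (((j' + 1 : ℕ) : ℝ) / Real.exp 1) ^ (j' + 1) := by
    positivity
  have hfac : (((j' + 1 : ℕ).factorial : ℝ)) = Stirling.stirlingSeq (j' + 1) *
      (Real.sqrt (2 * (j' + 1 : ℕ)) * (((j' + 1 : ℕ) : ℝ) / Real.exp 1) ^ (j' + 1)) := by
    rw [Stirling.stirlingSeq, div_mul_cancel₀ _ (ne_of_gt hX)]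
  rw [hfac]
  have hsqrt : Real.sqrt (2 * (j' + 1 : ℕ)) = Real.sqrt 2 * Real.sqrt (j' + 1 : ℕ) := by
    rw [← Real.sqrt_mul (by norm_num)]
  calc Stirling.stirlingSeq (j' + 1) *
      (Real.sqrt (2 * (j' + 1 : ℕ)) * (((j' + 1 : ℕ) : ℝ) / Real.exp 1) ^ (j' + 1))
      ≤ (Real.exp 1 / Real.sqrt 2) *
        (Real.sqrt (2 * (j' + 1 : ℕ)) * (((j' + 1 : ℕ) : ℝ) / Real.exp 1) ^ (j' + 1)) :=
        mul_le_mul_of_nonneg_right hss (le_of_lt hX)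
    _ = Real.exp 1 * Real.sqrt (j' + 1 : ℕ) * (((j' + 1 : ℕ) : ℝ) / Real.exp 1) ^ (j' + 1) := by
        rw [hsqrt]
        have h2 : Real.sqrt 2 ≠ 0 := by positivity
        field_simp

theorem pointwise_bound (k : ℕ) {t : ℝ} (ht : 0 < t) (x : ℝ) :
    x ^ (2 * k) ≤ ((2 * k).factorial : ℝ) / t ^ (2 * k) *
      (Real.exp (t * x) + Real.exp (-(t * x))) := by
  have hEpos : (0:ℝ) < Real.exp (t * x) + Real.exp (-(t * x)) := by positivity
  have key : (t * x) ^ (2 * k) ≤ ((2 * k).factorial : ℝ) *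
      (Real.exp (t * x) + Real.exp (-(t * x))) := by
    have h1 : |t * x| ^ (2 * k) / ((2 * k).factorial : ℝ) ≤ Real.exp |t * x| :=
      Real.pow_div_factorial_le_exp _ (abs_nonneg _) (2 * k)
    have h2 : Real.exp |t * x| ≤ Real.exp (t * x) + Real.exp (-(t * x)) := by
      rcases abs_cases (t * x) with ⟨h, _⟩ | ⟨h, _⟩
      · rw [h]; exact le_add_of_nonneg_right (Real.exp_pos _).le
      · rw [h]; exact le_add_of_nonneg_left (Real.exp_pos _).le
    have h3 : (t * x) ^ (2 * k) = |t * x| ^ (2 * k) := by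
      rw [pow_abs, abs_of_nonneg ((even_two_mul k).pow_nonneg _)]
    rw [h3]
    have := (div_le_iff₀ (by positivity : (0:ℝ) < ((2 * k).factorial : ℝ))).mp (h1.trans h2)
    linarith [this]
  rw [div_mul_eq_mul_div, le_div_iff₀ (by positivity : (0:ℝ) < t ^ (2 * k))]
  calc x ^ (2 * k) * t ^ (2 * k) = (t * x) ^ (2 * k) := by rw [mul_pow]; ring
    _ ≤ _ := key

theorem even_bound (n k : ℕ) (hn : 1 ≤ n) (hk : 1 ≤ k) :
    ((4:ℝ) ^ n)⁻¹ * ∑ u : (Fin n → Bool) × (Fin n → Bool),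
        (∑ i, sgn (u.1 i) * sgn (u.2 i)) ^ (2 * k)
      ≤ 2 * ((2 * k).factorial : ℝ) * ((n:ℝ) ^ k / ((2 * k : ℕ) : ℝ) ^ k) * Real.exp k := by
  have hn0 : (0:ℝ) < n := by exact_mod_cast hn
  have hk0 : (0:ℝ) < (2 * k : ℕ) := by positivity
  set t : ℝ := Real.sqrt ((2 * k : ℕ) / n) with htdef
  have htpos : 0 < t := Real.sqrt_pos.mpr (by positivity)
  have ht2 : t ^ 2 = (2 * k : ℕ) / n := Real.sq_sqrt (by positivity)
  have hsum : ∑ u : (Fin n → Bool) × (Fin n → Bool),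
      (∑ i, sgn (u.1 i) * sgn (u.2 i)) ^ (2 * k)
      ≤ ((2 * k).factorial : ℝ) / t ^ (2 * k) *
        (2 * (2 * (Real.exp t + Real.exp (-t))) ^ n) := by
    calc ∑ u : (Fin n → Bool) × (Fin n → Bool),
        (∑ i, sgn (u.1 i) * sgn (u.2 i)) ^ (2 * k)
        ≤ ∑ u : (Fin n → Bool) × (Fin n → Bool),
          ((2 * k).factorial : ℝ) / t ^ (2 * k) *
            (Real.exp (t * ∑ i, sgn (u.1 i) * sgn (u.2 i)) +
             Real.exp (-(t * ∑ i, sgn (u.1 i) * sgn (u.2 i)))) :=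
          Finset.sum_le_sum fun u _ => pointwise_bound k htpos _
      _ = ((2 * k).factorial : ℝ) / t ^ (2 * k) *
          ((∑ u : (Fin n → Bool) × (Fin n → Bool),
              Real.exp (t * ∑ i, sgn (u.1 i) * sgn (u.2 i))) +
           ∑ u : (Fin n → Bool) × (Fin n → Bool),
              Real.exp (-t * ∑ i, sgn (u.1 i) * sgn (u.2 i))) := by
          rw [← Finset.mul_sum, ← Finset.sum_add_distrib]
          congr 1
          refine Finset.sum_congr rfl fun u _ => ?_
          rw [neg_mul]
      _ = ((2 * k).factorial : ℝ) / t ^ (2 * k) *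
          ((2 * (Real.exp t + Real.exp (-t))) ^ n +
            (2 * (Real.exp (-t) + Real.exp (- -t))) ^ n) := by
          rw [sum_exp n t, sum_exp n (-t)]
      _ = ((2 * k).factorial : ℝ) / t ^ (2 * k) *
          (2 * (2 * (Real.exp t + Real.exp (-t))) ^ n) := by
          rw [neg_neg]
          ring_nf
  have h4 : (0:ℝ) ≤ ((4:ℝ) ^ n)⁻¹ := by positivity
  calc ((4:ℝ) ^ n)⁻¹ * ∑ u : (Fin n → Bool) × (Fin n → Bool),
        (∑ i, sgn (u.1 i) * sgn (u.2 i)) ^ (2 * k)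
      ≤ ((4:ℝ) ^ n)⁻¹ * (((2 * k).factorial : ℝ) / t ^ (2 * k) *
          (2 * (2 * (Real.exp t + Real.exp (-t))) ^ n)) := mul_le_mul_of_nonneg_left hsum h4
    _ = 2 * (((2 * k).factorial : ℝ) / t ^ (2 * k)) *
          ((Real.exp t + Real.exp (-t)) / 2) ^ n := by
        rw [div_pow]
        have : ((4:ℝ) ^ n) = 2 ^ n * 2 ^ n := by
          rw [← mul_pow]; norm_num
        rw [this, mul_pow]
        have h2n : (0:ℝ) < (2:ℝ) ^ n := by positivity
        field_simp
    _ ≤ 2 * (((2 * k).factorial : ℝ) / t ^ (2 * k)) * Real.exp k := by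
        refine mul_le_mul_of_nonneg_left ?_ (by positivity)
        have hcosh : ∀ m : ℝ, (Real.exp m + Real.exp (-m)) / 2 = Real.cosh m :=
          fun m => (Real.cosh_eq m).symm
        rw [hcosh]
        calc Real.cosh t ^ n ≤ Real.exp (t ^ 2 / 2) ^ n :=
              pow_le_pow_left₀ (Real.cosh_pos t).le (Real.cosh_le_exp_half_sq t) n
          _ = Real.exp (n * (t ^ 2 / 2)) := by rw [← Real.exp_nat_mul]
          _ = Real.exp k := by
              congr 1
              rw [ht2]
              field_simp
              push_cast
              ring
    _ = 2 * ((2 * k).factorial : ℝ) * ((n:ℝ) ^ k / ((2 * k : ℕ) : ℝ) ^ k) * Real.exp k := by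
        have htk : t ^ (2 * k) = (((2 * k : ℕ) : ℝ) / n) ^ k := by
          rw [pow_mul, ht2]
        rw [htk, div_pow]
        have hnk : (0:ℝ) < (n:ℝ) ^ k := by positivity
        have h2k : (0:ℝ) < ((2 * k : ℕ) : ℝ) ^ k := by positivity
        field_simp

theorem sq_rpow {b : ℝ} (hb : 0 ≤ b) (e : ℝ) : (b ^ e) ^ (2:ℕ) = b ^ (e * 2) := by
  rw [← Real.rpow_natCast (b ^ e) 2, ← Real.rpow_mul hb]
  norm_num

theorem pow_rpow {b : ℝ} (hb : 0 ≤ b) (e : ℝ) (d : ℕ) : (b ^ e) ^ d = b ^ (e * d) := by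
  rw [← Real.rpow_natCast (b ^ e) d, ← Real.rpow_mul hb]

theorem term_bound (p d Dn n k : ℕ) (hp : 2 ≤ p) (hd : 1 ≤ d) (hdD : d ≤ Dn) (hn : 1 ≤ n)
    (hk2 : 2 * k = p * d) (a : ℝ) (ha : 0 < a)
    (hb : a ≤ (1 / Real.sqrt 2) * (p : ℝ) ^ (-(p : ℝ) / 4 - 1 / 2) *
        (n : ℝ) ^ (-(p : ℝ) / 4) * (Dn : ℝ) ^ ((2 - (p : ℝ)) / 4)) :
    a ^ (2 * d) / (d.factorial : ℝ) *
      (2 * Real.exp 1 * Real.sqrt ((2 * k : ℕ)) * ((2 * k : ℕ) : ℝ) ^ k * (n : ℝ) ^ k /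
        Real.exp k)
    ≤ 2 * Real.exp 1 * Real.sqrt p * (1 / 2) ^ d := by
  set q : ℝ := (p : ℝ) with hqdef
  set dd : ℝ := (d : ℝ) with hdddef
  set N : ℝ := (n : ℝ) with hNdef
  set DD : ℝ := (Dn : ℝ) with hDDdef
  have hq2 : (2:ℝ) ≤ q := by rw [hqdef]; exact_mod_cast hp
  have hq0 : (0:ℝ) < q := by linarith
  have hdd1 : (1:ℝ) ≤ dd := by rw [hdddef]; exact_mod_cast hd
  have hdd0 : (0:ℝ) < dd := by linarith
  have hN1 : (1:ℝ) ≤ N := by rw [hNdef]; exact_mod_cast hn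
  have hN0 : (0:ℝ) < N := by linarith
  have hDDdd : dd ≤ DD := by rw [hdddef, hDDdef]; exact_mod_cast hdD
  have hDD0 : (0:ℝ) < DD := by linarith
  have hkk : (k : ℝ) = q * dd / 2 := by
    have h := Nat.cast_inj (R := ℝ) |>.mpr hk2
    push_cast at h
    rw [hqdef, hdddef]
    linarith
  have hdk : d ≤ k := by
    have h2d : 2 * d ≤ 2 * k := by
      rw [hk2]
      exact Nat.mul_le_mul_right d hp
    omega
  have hk1 : 1 ≤ k := by omega
  -- squared bound on a
  have h1 : a ^ (2:ℕ) ≤ (1/2) * (q ^ (-q/2 - 1 : ℝ) * (N ^ (-q/2 : ℝ) * DD ^ ((2-q)/2 : ℝ))) := by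
    calc a ^ (2:ℕ) ≤ ((1 / Real.sqrt 2) * q ^ (-q / 4 - 1 / 2 : ℝ) *
          N ^ (-q / 4 : ℝ) * DD ^ ((2 - q) / 4 : ℝ)) ^ (2:ℕ) :=
        pow_le_pow_left₀ ha.le hb 2
      _ = (1 / Real.sqrt 2) ^ (2:ℕ) * ((q ^ (-q / 4 - 1 / 2 : ℝ)) ^ (2:ℕ) *
          ((N ^ (-q / 4 : ℝ)) ^ (2:ℕ) * (DD ^ ((2 - q) / 4 : ℝ)) ^ (2:ℕ))) := by ring
      _ = (1/2) * (q ^ (-q/2 - 1 : ℝ) * (N ^ (-q/2 : ℝ) * DD ^ ((2-q)/2 : ℝ))) := by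
        rw [sq_rpow hq0.le, sq_rpow hN0.le, sq_rpow hDD0.le]
        rw [div_pow, one_pow, Real.sq_sqrt (by norm_num : (0:ℝ) ≤ 2)]
        rw [show ((-q / 4 - 1 / 2) * 2 : ℝ) = -q/2 - 1 from by ring,
          show ((-q / 4) * 2 : ℝ) = -q/2 from by ring,
          show (((2 - q) / 4) * 2 : ℝ) = (2-q)/2 from by ring]
  -- d-th power
  have h2 : a ^ (2 * d) ≤ (1/2 : ℝ) ^ d * (q ^ ((-q/2 - 1) * dd) *
      (N ^ ((-q/2) * dd) * DD ^ ((2-q)/2 * dd))) := by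
    rw [pow_mul]
    calc (a ^ (2:ℕ)) ^ d ≤ ((1/2) * (q ^ (-q/2 - 1 : ℝ) *
          (N ^ (-q/2 : ℝ) * DD ^ ((2-q)/2 : ℝ)))) ^ d :=
        pow_le_pow_left₀ (by positivity) h1 d
      _ = (1/2 : ℝ) ^ d * ((q ^ (-q/2 - 1 : ℝ)) ^ d *
          ((N ^ (-q/2 : ℝ)) ^ d * (DD ^ ((2-q)/2 : ℝ)) ^ d)) := by ring
      _ = _ := by rw [pow_rpow hq0.le, pow_rpow hN0.le, pow_rpow hDD0.le, hdddef]
  -- rewrite the moment factor in rpow form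
  have hM : ((2 * k : ℕ) : ℝ) ^ k * (n : ℝ) ^ k
      = q ^ ((k:ℝ)) * dd ^ ((k:ℝ)) * N ^ ((k:ℝ)) := by
    have hc : ((2 * k : ℕ) : ℝ) = q * dd := by
      have h := Nat.cast_inj (R := ℝ) |>.mpr hk2
      push_cast at h ⊢
      rw [hqdef, hdddef]
      linarith
    rw [hc, mul_pow, Real.rpow_natCast, Real.rpow_natCast, Real.rpow_natCast]
  have hMnonneg : (0:ℝ) ≤ 2 * Real.exp 1 * Real.sqrt ((2 * k : ℕ)) *
      (((2 * k : ℕ) : ℝ) ^ k * (n : ℝ) ^ k) / Real.exp k := by positivity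
  -- main chain
  have hfd : (0:ℝ) < (d.factorial : ℝ) := by positivity
  rw [div_mul_eq_mul_div, div_le_iff₀ hfd]
  have step1 : a ^ (2 * d) *
      (2 * Real.exp 1 * Real.sqrt ((2 * k : ℕ)) * ((2 * k : ℕ) : ℝ) ^ k * (n : ℝ) ^ k /
        Real.exp k)
      ≤ ((1/2 : ℝ) ^ d * (q ^ ((-q/2 - 1) * dd) * (N ^ ((-q/2) * dd) * DD ^ ((2-q)/2 * dd)))) *
        (2 * Real.exp 1 * Real.sqrt ((2 * k : ℕ)) * ((2 * k : ℕ) : ℝ) ^ k * (n : ℝ) ^ k /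
          Real.exp k) := by
    refine mul_le_mul_of_nonneg_right h2 ?_
    positivity
  refine step1.trans ?_
  -- now pure algebra + remaining claims
  have claimA : q ^ ((-q/2 - 1) * dd) * q ^ ((k:ℝ)) = q ^ (-dd) := by
    rw [← Real.rpow_add hq0, hkk]
    congr 1
    ring
  have claimB : N ^ ((-q/2) * dd) * N ^ ((k:ℝ)) = 1 := by
    rw [← Real.rpow_add hN0, hkk,
      show ((-q/2) * dd + q * dd / 2 : ℝ) = 0 from by ring, Real.rpow_zero]
  have claimC : dd ^ ((k:ℝ)) = dd ^ dd * dd ^ ((k:ℝ) - dd) := by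
    rw [← Real.rpow_add hdd0]
    congr 1
    ring
  have claimD : dd ^ ((k:ℝ) - dd) ≤ DD ^ ((k:ℝ) - dd) := by
    refine Real.rpow_le_rpow hdd0.le hDDdd ?_
    rw [hkk]
    nlinarith
  have claimE : DD ^ ((2-q)/2 * dd) * DD ^ ((k:ℝ) - dd) = 1 := by
    rw [← Real.rpow_add hDD0, hkk,
      show ((2-q)/2 * dd + (q * dd / 2 - dd) : ℝ) = 0 from by ring, Real.rpow_zero]
  have claimF : q ^ (-dd) ≤ (1/2 : ℝ) ^ d := by
    rw [Real.rpow_neg hq0.le, hdddef, Real.rpow_natCast]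
    rw [div_pow, one_pow, one_div]
    refine inv_anti₀ (by positivity) ?_
    exact pow_le_pow_left₀ (by norm_num) hq2 d
  have claimG : dd ^ dd ≤ (d.factorial : ℝ) * Real.exp d := by
    rw [hdddef, Real.rpow_natCast]
    have := Real.pow_div_factorial_le_exp (d:ℝ) (by positivity) d
    rw [div_le_iff₀ hfd] at this
    calc ((d:ℝ)) ^ d ≤ Real.exp d * (d.factorial : ℝ) := this
      _ = (d.factorial : ℝ) * Real.exp d := by ring
  have claimH : Real.sqrt ((2 * k : ℕ)) ≤ Real.sqrt q * (2:ℝ) ^ d := by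
    have hc : ((2 * k : ℕ) : ℝ) = q * dd := by
      have h := Nat.cast_inj (R := ℝ) |>.mpr hk2
      push_cast at h ⊢
      rw [hqdef, hdddef]
      linarith
    rw [hc, Real.sqrt_mul hq0.le]
    refine mul_le_mul_of_nonneg_left ?_ (Real.sqrt_nonneg q)
    calc Real.sqrt dd ≤ Real.sqrt (dd ^ 2) := Real.sqrt_le_sqrt (by nlinarith)
      _ = dd := Real.sqrt_sq hdd0.le
      _ ≤ (2:ℝ) ^ d := by
          rw [hdddef]
          exact_mod_cast (Nat.lt_two_pow_self (n := d)).le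
  have claimI : Real.exp d ≤ Real.exp k := Real.exp_le_exp.mpr (by exact_mod_cast hdk)
  have b1 : DD ^ ((2-q)/2 * dd) * dd ^ ((k:ℝ)) ≤ dd ^ dd := by
    rw [claimC]
    calc DD ^ ((2-q)/2 * dd) * (dd ^ dd * dd ^ ((k:ℝ) - dd))
        ≤ DD ^ ((2-q)/2 * dd) * (dd ^ dd * DD ^ ((k:ℝ) - dd)) := by
          have h0 : (0:ℝ) ≤ DD ^ ((2-q)/2 * dd) := (Real.rpow_pos_of_pos hDD0 _).le
          have h1' : (0:ℝ) ≤ dd ^ dd := (Real.rpow_pos_of_pos hdd0 _).le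
          refine mul_le_mul_of_nonneg_left (mul_le_mul_of_nonneg_left claimD h1') h0
      _ = dd ^ dd * (DD ^ ((2-q)/2 * dd) * DD ^ ((k:ℝ) - dd)) := by ring
      _ = dd ^ dd := by rw [claimE, mul_one]
  calc ((1/2 : ℝ) ^ d * (q ^ ((-q/2 - 1) * dd) * (N ^ ((-q/2) * dd) * DD ^ ((2-q)/2 * dd)))) *
        (2 * Real.exp 1 * Real.sqrt ((2 * k : ℕ)) * ((2 * k : ℕ) : ℝ) ^ k * (n : ℝ) ^ k /
          Real.exp k)
      = (1/2 : ℝ) ^ d * (2 * Real.exp 1 * Real.sqrt ((2 * k : ℕ))) *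
          ((q ^ ((-q/2 - 1) * dd) * q ^ ((k:ℝ))) * ((N ^ ((-q/2) * dd) * N ^ ((k:ℝ))) *
            (DD ^ ((2-q)/2 * dd) * dd ^ ((k:ℝ))))) / Real.exp k := by
        rw [show (2 * Real.exp 1 * Real.sqrt ((2 * k : ℕ)) * ((2 * k : ℕ) : ℝ) ^ k *
            (n : ℝ) ^ k / Real.exp k)
          = (2 * Real.exp 1 * Real.sqrt ((2 * k : ℕ)) * (((2 * k : ℕ) : ℝ) ^ k * (n : ℝ) ^ k) /
            Real.exp k) from by ring, hM]
        ring
    _ = (1/2 : ℝ) ^ d * (2 * Real.exp 1 * Real.sqrt ((2 * k : ℕ))) *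
          (q ^ (-dd) * (1 * (DD ^ ((2-q)/2 * dd) * dd ^ ((k:ℝ))))) / Real.exp k := by
        rw [claimA, claimB]
    _ ≤ (1/2 : ℝ) ^ d * (2 * Real.exp 1 * (Real.sqrt q * (2:ℝ) ^ d)) *
          ((1/2 : ℝ) ^ d * (1 * ((d.factorial : ℝ) * Real.exp d))) / Real.exp k := by
        gcongr (1/2 : ℝ) ^ d * (2 * Real.exp 1 * ?_) * (?_ * (1 * ?_)) / Real.exp (k:ℝ)
        all_goals first
          | exact claimH
          | exact claimF
          | exact b1.trans claimG
    _ = (2 * Real.exp 1 * Real.sqrt q * (1/2 : ℝ) ^ d * (d.factorial : ℝ)) *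
          (((2:ℝ) ^ d * (1/2 : ℝ) ^ d) * (Real.exp d / Real.exp k)) := by
        field_simp
    _ = (2 * Real.exp 1 * Real.sqrt q * (1/2 : ℝ) ^ d * (d.factorial : ℝ)) *
          (Real.exp d / Real.exp k) := by
        rw [← mul_pow]
        norm_num
    _ ≤ (2 * Real.exp 1 * Real.sqrt q * (1/2 : ℝ) ^ d * (d.factorial : ℝ)) * 1 := by
        refine mul_le_mul_of_nonneg_left ?_ (by positivity)
        rw [div_le_one (Real.exp_pos _)]
        exact claimI
    _ = 2 * Real.exp 1 * Real.sqrt q * (1/2 : ℝ) ^ d * (d.factorial : ℝ) := mul_one _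

theorem even_bound' (n k : ℕ) (hn : 1 ≤ n) (hk : 1 ≤ k) :
    ((4:ℝ) ^ n)⁻¹ * ∑ u : (Fin n → Bool) × (Fin n → Bool),
        (∑ i, sgn (u.1 i) * sgn (u.2 i)) ^ (2 * k)
      ≤ 2 * Real.exp 1 * Real.sqrt ((2 * k : ℕ)) * ((2 * k : ℕ) : ℝ) ^ k * (n : ℝ) ^ k /
        Real.exp k := by
  refine (even_bound n k hn hk).trans ?_
  have hfac := factorial_le (j := 2 * k) (by omega)
  have hA0 : (0:ℝ) < ((2 * k : ℕ) : ℝ) := by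
    have : 0 < 2 * k := by omega
    exact_mod_cast this
  calc 2 * ((2 * k).factorial : ℝ) * ((n:ℝ) ^ k / ((2 * k : ℕ) : ℝ) ^ k) * Real.exp k
      ≤ 2 * (Real.exp 1 * Real.sqrt ((2 * k : ℕ)) *
          (((2 * k : ℕ) : ℝ) / Real.exp 1) ^ (2 * k)) *
          ((n:ℝ) ^ k / ((2 * k : ℕ) : ℝ) ^ k) * Real.exp k := by gcongr
    _ = 2 * Real.exp 1 * Real.sqrt ((2 * k : ℕ)) * ((2 * k : ℕ) : ℝ) ^ k * (n : ℝ) ^ k /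
        Real.exp k := by
      have hE : (Real.exp 1) ^ (2 * k) = Real.exp k * Real.exp k := by
        rw [← Real.exp_nat_mul, ← Real.exp_add]
        push_cast
        ring_nf
      have hA : ((2 * k : ℕ) : ℝ) ^ (2 * k) = ((2 * k : ℕ) : ℝ) ^ k * ((2 * k : ℕ) : ℝ) ^ k := by
        rw [two_mul, pow_add]
      rw [div_pow, hE, hA]
      have h1 : Real.exp 1 ≠ 0 := Real.exp_ne_zero 1
      have h2 : Real.exp (k:ℝ) ≠ 0 := Real.exp_ne_zero _
      have h3 : ((2 * k : ℕ) : ℝ) ^ k ≠ 0 := by positivity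
      field_simp

theorem integral_moment (n m : ℕ) :
    (∫ q, (∑ i, q.1 i * q.2 i) ^ m
      ∂((Measure.pi fun _ : Fin n => rad).prod (Measure.pi fun _ : Fin n => rad)))
      = ((4:ℝ) ^ n)⁻¹ * ∑ u : (Fin n → Bool) × (Fin n → Bool),
          (∑ i, sgn (u.1 i) * sgn (u.2 i)) ^ m := by
  have hcont : Continuous fun q : (Fin n → ℝ) × (Fin n → ℝ) => (∑ i, q.1 i * q.2 i) ^ m :=
    (continuous_finset_sum Finset.univ fun i _ =>
      ((continuous_apply i).comp continuous_fst).mul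
        ((continuous_apply i).comp continuous_snd)).pow m
  rw [integral_prod_rad n _ hcont.stronglyMeasurable]
  simp only [vv]

theorem geom_le_two (N : ℕ) : ∑ d ∈ Finset.range N, ((1:ℝ)/2) ^ d ≤ 2 := by
  rw [geom_sum_eq (by norm_num : (1/2:ℝ) ≠ 1) N]
  have h : (0:ℝ) ≤ (1/2:ℝ) ^ N := by positivity
  rw [div_le_iff_of_neg (by norm_num : (1/2:ℝ) - 1 < 0)]
  linarith

end Stmt15Aux

/-- Spiked tensor model, LDLR upper bound: with
`‖L_n^{≤D}‖² = Σ_{d=0}^D (λ^{2d}/d!) E[⟨x¹,x²⟩^{pd}]` over Rademacher vectors,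
if `λ ≤ (1/√2) p^{−p/4−1/2} n^{−p/4} D^{(2−p)/4}` for all large `n`,
then `‖L_n^{≤D}‖²` remains bounded as `n → ∞`. -/
theorem stmt15 (p : ℕ) (hp : 2 ≤ p) (D : ℕ → ℕ) (lam : ℕ → ℝ)
    (hlam : ∀ n, 0 < lam n)
    (S : ℕ → ℝ)
    (hS : ∀ n, S n = ∑ d ∈ Finset.range (D n + 1),
      (lam n) ^ (2 * d) / (Nat.factorial d : ℝ) *
        ∫ q, (∑ i, q.1 i * q.2 i) ^ (p * d)
          ∂((Measure.pi fun _ : Fin n => rad).prod (Measure.pi fun _ : Fin n => rad)))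
    (hbound : ∀ᶠ n in atTop,
      lam n ≤ (1 / Real.sqrt 2) * (p : ℝ) ^ (-(p : ℝ) / 4 - 1 / 2) *
        (n : ℝ) ^ (-(p : ℝ) / 4) * (D n : ℝ) ^ ((2 - (p : ℝ)) / 4)) :
    ∃ C : ℝ, ∀ᶠ n in atTop, S n ≤ C := by
  refine ⟨2 * (1 + 2 * Real.exp 1 * Real.sqrt p), ?_⟩
  filter_upwards [hbound, eventually_ge_atTop 1] with n hb hn1
  rw [hS n]
  have hcp : (0:ℝ) ≤ 1 + 2 * Real.exp 1 * Real.sqrt p := by positivity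
  have key : ∀ d ∈ Finset.range (D n + 1),
      (lam n) ^ (2 * d) / (Nat.factorial d : ℝ) *
        (∫ q, (∑ i, q.1 i * q.2 i) ^ (p * d)
          ∂((Measure.pi fun _ : Fin n => rad).prod (Measure.pi fun _ : Fin n => rad)))
      ≤ (1 + 2 * Real.exp 1 * Real.sqrt p) * ((1:ℝ)/2) ^ d := by
    intro d hd
    have hdD : d ≤ D n := by
      have := Finset.mem_range.mp hd
      omega
    rw [Stmt15Aux.integral_moment n (p * d)]
    rcases Nat.eq_zero_or_pos d with rfl | hd1
    · simp only [Nat.mul_zero, pow_zero, Nat.factorial_zero, Nat.cast_one, div_one, one_mul]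
      have hcard : ∑ u : (Fin n → Bool) × (Fin n → Bool), (1:ℝ)
          = ((2:ℝ) ^ n) * ((2:ℝ) ^ n) := by
        rw [Finset.sum_const, Finset.card_univ]
        simp [Fintype.card_prod]
      rw [hcard]
      have h4 : ((4:ℝ) ^ n) = (2:ℝ) ^ n * (2:ℝ) ^ n := by
        rw [← mul_pow]; norm_num
      rw [h4, inv_mul_cancel₀ (by positivity)]
      have hnn : (0:ℝ) ≤ 2 * Real.exp 1 * Real.sqrt p := by positivity
      norm_num
      linarith
    · rcases Nat.even_or_odd (p * d) with ⟨k, hk⟩ | hodd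
      · -- even case : p * d = k + k
        have hk2 : 2 * k = p * d := by omega
        have hk1 : 1 ≤ k := by
          have h2 : 2 * 1 ≤ p * d := Nat.mul_le_mul hp hd1
          omega
        have hmom := Stmt15Aux.even_bound' n k hn1 hk1
        rw [show p * d = 2 * k from hk2.symm]
        calc (lam n) ^ (2 * d) / (Nat.factorial d : ℝ) *
              (((4:ℝ) ^ n)⁻¹ * ∑ u : (Fin n → Bool) × (Fin n → Bool),
                (∑ i, Stmt15Aux.sgn (u.1 i) * Stmt15Aux.sgn (u.2 i)) ^ (2 * k))
            ≤ (lam n) ^ (2 * d) / (Nat.factorial d : ℝ) *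
              (2 * Real.exp 1 * Real.sqrt ((2 * k : ℕ)) * ((2 * k : ℕ) : ℝ) ^ k *
                (n : ℝ) ^ k / Real.exp k) := by
              exact mul_le_mul_of_nonneg_left hmom
                (div_nonneg (pow_nonneg (hlam n).le _) (Nat.cast_nonneg _))
          _ ≤ 2 * Real.exp 1 * Real.sqrt p * ((1:ℝ)/2) ^ d :=
              Stmt15Aux.term_bound p d (D n) n k hp hd1 hdD hn1 hk2 (lam n) (hlam n) hb
          _ ≤ (1 + 2 * Real.exp 1 * Real.sqrt p) * ((1:ℝ)/2) ^ d := by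
              have : (0:ℝ) ≤ ((1:ℝ)/2) ^ d := by positivity
              nlinarith
      · rw [Stmt15Aux.sum_odd n (p * d) hodd]
        rw [mul_zero, mul_zero]
        positivity
  calc ∑ d ∈ Finset.range (D n + 1),
        (lam n) ^ (2 * d) / (Nat.factorial d : ℝ) *
          (∫ q, (∑ i, q.1 i * q.2 i) ^ (p * d)
            ∂((Measure.pi fun _ : Fin n => rad).prod (Measure.pi fun _ : Fin n => rad)))
      ≤ ∑ d ∈ Finset.range (D n + 1),
          (1 + 2 * Real.exp 1 * Real.sqrt p) * ((1:ℝ)/2) ^ d := Finset.sum_le_sum key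
    _ = (1 + 2 * Real.exp 1 * Real.sqrt p) * ∑ d ∈ Finset.range (D n + 1), ((1:ℝ)/2) ^ d := by
        rw [Finset.mul_sum]
    _ ≤ (1 + 2 * Real.exp 1 * Real.sqrt p) * 2 :=
        mul_le_mul_of_nonneg_left (Stmt15Aux.geom_le_two _) hcp
    _ = 2 * (1 + 2 * Real.exp 1 * Real.sqrt p) := by ring
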